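/- Let A = (a_{st}) be an n×n complex correlation matrix. Then for all indices i < j < q one has | |a_{ij}| − |a_{iq}| | ≤ √(1 − |a_{jq}|²) ≤ √2 · √(1 − |a_{jq}|). -/

import Mathlib

open Real ComplexOrder
open scoped InnerProductSpace

lemma key_ineq {E : Type*} [NormedAddCommGroup E] [InnerProductSpace ℂ E]
    (u v w : E) (hu : ‖u‖ = 1) (hv : ‖v‖ = 1) (hw : ‖w‖ = 1) :
    ‖⟪u, v⟫_ℂ‖ - ‖⟪u, w⟫_ℂ‖ ≤ Real.sqrt (1 - ‖⟪v, w⟫_ℂ‖ ^ 2) := by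
  set c := ⟪w, v⟫_ℂ with hc
  have hcn : ‖⟪v, w⟫_ℂ‖ = ‖c‖ := norm_inner_symm v w
  have hc1 : ‖c‖ ≤ 1 := by
    simpa [hw, hv] using norm_inner_le_norm (𝕜 := ℂ) w v
  have huw : ‖⟪u, w⟫_ℂ‖ ≤ 1 := by
    simpa [hu, hw] using norm_inner_le_norm (𝕜 := ℂ) u w
  have hvw : ⟪v, w⟫_ℂ = (starRingEnd ℂ) c := by rw [hc, inner_conj_symm]
  have hre : RCLike.re ⟪v, c • w⟫_ℂ = ‖c‖ ^ 2 := by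
    rw [inner_smul_right, hvw, Complex.mul_conj]
    simp [Complex.normSq_eq_norm_sq, ← Complex.ofReal_pow]
  have hns : ‖v - c • w‖ ^ 2 = 1 - ‖c‖ ^ 2 := by
    rw [norm_sub_sq (𝕜 := ℂ), hre, hv, norm_smul, hw]
    ring
  have hstep : ‖⟪u, v⟫_ℂ - c * ⟪u, w⟫_ℂ‖ ≤ Real.sqrt (1 - ‖c‖ ^ 2) := by
    have h3 : ⟪u, v - c • w⟫_ℂ = ⟪u, v⟫_ℂ - c * ⟪u, w⟫_ℂ := by
      rw [inner_sub_right, inner_smul_right]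
    calc ‖⟪u, v⟫_ℂ - c * ⟪u, w⟫_ℂ‖ = ‖⟪u, v - c • w⟫_ℂ‖ := by rw [h3]
      _ ≤ ‖u‖ * ‖v - c • w‖ := norm_inner_le_norm _ _
      _ = Real.sqrt (1 - ‖c‖ ^ 2) := by
          rw [hu, one_mul, ← hns, Real.sqrt_sq (norm_nonneg _)]
  have hlo : ‖⟪u, v⟫_ℂ‖ - ‖c‖ * ‖⟪u, w⟫_ℂ‖ ≤ ‖⟪u, v⟫_ℂ - c * ⟪u, w⟫_ℂ‖ := by
    calc ‖⟪u, v⟫_ℂ‖ - ‖c‖ * ‖⟪u, w⟫_ℂ‖ = ‖⟪u, v⟫_ℂ‖ - ‖c * ⟪u, w⟫_ℂ‖ := by rw [norm_mul]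
      _ ≤ ‖⟪u, v⟫_ℂ - c * ⟪u, w⟫_ℂ‖ := norm_sub_norm_le _ _
  have hmul : ‖c‖ * ‖⟪u, w⟫_ℂ‖ ≤ ‖⟪u, w⟫_ℂ‖ := by
    nlinarith [norm_nonneg (⟪u, w⟫_ℂ)]
  rw [hcn]
  linarith

theorem stmt4 {n : ℕ} (A : Matrix (Fin n) (Fin n) ℂ)
    (hA : A.PosSemidef) (hdiag : ∀ i, A i i = 1)
    (i j q : Fin n) (hij : i < j) (hjq : j < q) :
    |‖A i j‖ - ‖A i q‖| ≤
        Real.sqrt (1 - ‖A j q‖ ^ 2) ∧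
      Real.sqrt (1 - ‖A j q‖ ^ 2) ≤
        Real.sqrt 2 * Real.sqrt (1 - ‖A j q‖) := by
  obtain ⟨B, hB⟩ : ∃ B : Matrix (Fin n) (Fin n) ℂ, A = Matrix.conjTranspose B * B := by
    open scoped MatrixOrder Matrix.Norms.L2Operator in
    exact CStarAlgebra.nonneg_iff_eq_star_mul_self.mp hA.nonneg
  set col : Fin n → EuclideanSpace ℂ (Fin n) := fun s => WithLp.toLp 2 (fun k => B k s) with hcol
  have hinner : ∀ s t : Fin n, A s t = ⟪col s, col t⟫_ℂ := by
    intro s t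
    rw [hB]
    simp [hcol, Matrix.mul_apply, Matrix.conjTranspose_apply, PiLp.inner_apply,
      RCLike.inner_apply, mul_comm]
  have hnorm : ∀ s : Fin n, ‖col s‖ = 1 := by
    intro s
    have h1 : ⟪col s, col s⟫_ℂ = 1 := by rw [← hinner s s, hdiag]
    have h2 := inner_self_eq_norm_sq_to_K (𝕜 := ℂ) (col s)
    rw [h1] at h2
    have h3 : ((‖col s‖ ^ 2 : ℝ) : ℂ) = ((1:ℝ) : ℂ) := by push_cast; exact h2.symm
    have h3' : ‖col s‖ ^ 2 = 1 := by exact_mod_cast h3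
    nlinarith [norm_nonneg (col s), h3']
  have hij' : ‖A i j‖ = ‖⟪col i, col j⟫_ℂ‖ := by rw [hinner i j]
  have hiq' : ‖A i q‖ = ‖⟪col i, col q⟫_ℂ‖ := by rw [hinner i q]
  have hjq' : ‖A j q‖ = ‖⟪col j, col q⟫_ℂ‖ := by rw [hinner j q]
  have hvw1 : ‖A j q‖ ≤ 1 := by
    rw [hjq']
    simpa [hnorm j, hnorm q] using norm_inner_le_norm (𝕜 := ℂ) (col j) (col q)
  have hvw0 : 0 ≤ ‖A j q‖ := norm_nonneg _
  constructor
  · rw [abs_sub_le_iff]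
    constructor
    · rw [hij', hiq', hjq']
      exact key_ineq (col i) (col j) (col q) (hnorm i) (hnorm j) (hnorm q)
    · rw [hij', hiq', hjq', norm_inner_symm (col j) (col q)]
      exact key_ineq (col i) (col q) (col j) (hnorm i) (hnorm q) (hnorm j)
  · rw [← Real.sqrt_mul (by norm_num : (0:ℝ) ≤ 2)]
    apply Real.sqrt_le_sqrt
    nlinarith
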